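/- Let α, β be real numbers with 2 < α < 3 and 3 < β < 4, and set p₋ = (β+1−√((β+1)(β−3)))/(2β) and p₊ = (β+1+√((β+1)(β−3)))/(2β). If the conditions (C5a) f_β((α−1)/α) = p₊, (C5b) f_α(p₋) = (α−1)/α, (C5c) f_α((β−1)/β) = p₋, (C5d) f_α(1/β) = p₋, and (C5e) f_α(p₊) = 1/β all hold, then β = 2α − 1 and α satisfies the cubic equation 2α³ − 6α² + 4α − 1 = 0 (equivalently, 2(α−1)³ − 2(α−1) − 1 = 0). -/

import Mathlib

/-- The logistic map `f_γ(x) = γ·x·(1−x)`. -/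
def logistic (γ x : ℝ) : ℝ := γ * x * (1 - x)

/-- If `2 < α < 3`, `3 < β < 4`, and conditions (C5a)–(C5e) hold, then `β = 2α − 1`
and `α` satisfies `2α³ − 6α² + 4α − 1 = 0` (equivalently `2(α−1)³ − 2(α−1) − 1 = 0`). -/
theorem logistic_IFS_five_point_cubics (α β : ℝ)
    (hα1 : 2 < α) (hα2 : α < 3) (hβ1 : 3 < β) (hβ2 : β < 4)
    (pm pp : ℝ)
    (hpm : pm = (β + 1 - Real.sqrt ((β + 1) * (β - 3))) / (2 * β))
    (hpp : pp = (β + 1 + Real.sqrt ((β + 1) * (β - 3))) / (2 * β))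
    (hC5a : logistic β ((α - 1) / α) = pp)
    (hC5b : logistic α pm = (α - 1) / α)
    (hC5c : logistic α ((β - 1) / β) = pm)
    (hC5d : logistic α (1 / β) = pm)
    (hC5e : logistic α pp = 1 / β) :
    β = 2 * α - 1 ∧
    2 * α ^ 3 - 6 * α ^ 2 + 4 * α - 1 = 0 ∧
    2 * (α - 1) ^ 3 - 2 * (α - 1) - 1 = 0 := by
  have hα0 : α ≠ 0 := by linarith
  have hβ0 : β ≠ 0 := by linarith
  set s := Real.sqrt ((β + 1) * (β - 3)) with hs
  have hs2 : s * s = (β + 1) * (β - 3) :=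
    Real.mul_self_sqrt (by nlinarith)
  -- explicit values of pp and pm
  have hppv : pp = β * (α - 1) / α ^ 2 := by
    rw [← hC5a]; unfold logistic
    field_simp
    ring
  have hpmv : pm = α * (β - 1) / β ^ 2 := by
    rw [← hC5d]; unfold logistic
    field_simp
  -- sum and product of pm, pp
  have hsum : pm + pp = (β + 1) / β := by
    rw [hpm, hpp]; field_simp; ring
  have hprod : pm * pp = (β + 1) / β ^ 2 := by
    rw [hpm, hpp]
    have h4 : (β + 1 - s) * (β + 1 + s) = 4 * (β + 1) := by
      linear_combination -hs2
    field_simp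
    linear_combination h4
  -- polynomial equations
  have hE2 : α * (β ^ 2 - 2 * β - 1) = β ^ 2 - β := by
    rw [hpmv, hppv] at hprod
    field_simp at hprod
    apply mul_left_cancel₀ (show (α * β ^ 2 : ℝ) ≠ 0 by positivity)
    linear_combination α * β ^ 2 * hprod
  have hE1 : α ^ 3 * (β - 1) + β ^ 3 * (α - 1) = α ^ 2 * β * (β + 1) := by
    rw [hpmv, hppv] at hsum
    field_simp at hsum
    apply mul_left_cancel₀ hβ0
    linear_combination β * hsum
  -- key cubic for β
  have hcub3 : β ^ 3 * (β - 3) * (β ^ 3 - 3 * β ^ 2 - β - 1) = 0 := by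
    linear_combination (β ^ 2 - 2 * β - 1) ^ 3 * hE1 -
      (α ^ 2 * (β ^ 5 - 5 * β ^ 4 + 6 * β ^ 3 + 2 * β ^ 2 - 3 * β - 1) +
       α * (-β ^ 6 + 4 * β ^ 5 - 2 * β ^ 4 - 2 * β ^ 3 - 5 * β ^ 2 - 2 * β) +
       (β ^ 7 - 5 * β ^ 6 + 5 * β ^ 5 + 3 * β ^ 4 + 2 * β ^ 3 - 2 * β ^ 2)) * hE2
  have hne : β ^ 3 * (β - 3) > 0 := by nlinarith
  have hcub : β ^ 3 - 3 * β ^ 2 - β - 1 = 0 :=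
    (mul_eq_zero.mp hcub3).resolve_left (ne_of_gt hne)
  have hD : β ^ 2 - 2 * β - 1 > 0 := by nlinarith
  have hfac : (β - 2 * α + 1) * (β ^ 2 - 2 * β - 1) = 0 := by
    linear_combination hcub - 2 * hE2
  have hβα : β = 2 * α - 1 := by
    rcases mul_eq_zero.mp hfac with h | h
    · linarith
    · linarith
  have hc : (2 * α - 1) ^ 3 - 3 * (2 * α - 1) ^ 2 - (2 * α - 1) - 1 = 0 := by
    rw [← hβα]; exact hcub
  have hc2 : 2 * α ^ 3 - 6 * α ^ 2 + 4 * α - 1 = 0 := by linear_combination hc / 4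
  exact ⟨hβα, hc2, by linear_combination hc2⟩
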